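/- Let λ, μ, be reals with λ ≠ 0, let η ∈ ℝ² be nonzero, and for u ∈ ℝ let A(u) be the 2×2 matrix with rows (λ, -(μ-u)) and (μ-u, λ). Then for every u, the point v(u) = -u·A(u)⁻¹η satisfies |v(u) - ζ| = R, where ζ = -(1/2)((μ/λ)η + η*), R = (1/2)·√((μ² + λ²)/λ²)·|η|, and η* = θη with θ the 2×2 rotation matrix with rows (0,-1) and (1,0). -/

import Mathlib

noncomputable section
open Real Matrix

/-- Inclusion of `Fin 2 → ℝ` into the Euclidean plane, to use the Euclidean norm. -/
def toV (x : Fin 2 → ℝ) : EuclideanSpace ℝ (Fin 2) := WithLp.toLp 2 x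

/-- The rotation generator `θ`. -/
def th : Matrix (Fin 2) (Fin 2) ℝ := !![0, -1; 1, 0]

/-- For `λ ≠ 0` and `η ≠ 0`, every equilibrium `v(u) = -u·A(u)⁻¹η`, where `A(u)` has
rows `(λ, -(μ-u))` and `(μ-u, λ)`, lies on the circle of center
`ζ = -(1/2)((μ/λ)η + η*)` and radius `R = (1/2)√((μ²+λ²)/λ²)|η|`, where `η* = θη`. -/
theorem stmt5 (lam mu : ℝ) (hlam : lam ≠ 0) (eta : Fin 2 → ℝ) (heta : eta ≠ 0)
    (A : ℝ → Matrix (Fin 2) (Fin 2) ℝ)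
    (hA : ∀ u, A u = !![lam, -(mu - u); mu - u, lam])
    (v : ℝ → Fin 2 → ℝ) (hv : ∀ u, v u = (-u) • ((A u)⁻¹.mulVec eta))
    (etaStar : Fin 2 → ℝ) (hetaStar : etaStar = th.mulVec eta)
    (zeta : Fin 2 → ℝ) (hzeta : zeta = (-(1/2 : ℝ)) • ((mu / lam) • eta + etaStar))
    (R : ℝ) (hR : R = (1/2) * Real.sqrt ((mu ^ 2 + lam ^ 2) / lam ^ 2) * ‖toV eta‖) :
    ∀ u, ‖toV (v u - zeta)‖ = R := by
  intro u
  have hD : lam ^ 2 + (mu - u) ^ 2 > 0 := by positivity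
  have hDet : (A u).det = lam ^ 2 + (mu - u) ^ 2 := by
    rw [hA]; simp [Matrix.det_fin_two_of]; ring
  have hInv : (A u)⁻¹ = (lam ^ 2 + (mu - u) ^ 2)⁻¹ •
      !![lam, mu - u; -(mu - u), lam] := by
    rw [Matrix.inv_def, hDet, Ring.inverse_eq_inv']
    congr 1
    rw [hA]
    simp [Matrix.adjugate_fin_two]
  have hR0 : 0 ≤ R := by
    rw [hR]
    positivity
  have hnormeta : ‖toV eta‖ ^ 2 = eta 0 ^ 2 + eta 1 ^ 2 := by
    rw [EuclideanSpace.norm_eq, Real.sq_sqrt (by positivity)]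
    simp [toV, Fin.sum_univ_two]
  have hR2 : R ^ 2 = (1/4) * ((mu ^ 2 + lam ^ 2) / lam ^ 2) * (eta 0 ^ 2 + eta 1 ^ 2) := by
    rw [hR, mul_pow, mul_pow, Real.sq_sqrt (by positivity), hnormeta]
    ring
  rw [EuclideanSpace.norm_eq]
  simp only [Real.norm_eq_abs]
  have key : ∑ i : Fin 2, |toV (v u - zeta) i| ^ 2 = R ^ 2 := by
    rw [hR2]
    simp only [Fin.sum_univ_two, sq_abs, toV, WithLp.ofLp_toLp, Pi.sub_apply]
    rw [hv, hInv, hzeta, hetaStar]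
    simp only [Matrix.smul_mulVec, Pi.smul_apply, smul_eq_mul,
      Matrix.mulVec, dotProduct, Fin.sum_univ_two, th,
      Matrix.cons_val', Matrix.cons_val_zero, Matrix.cons_val_one, Matrix.head_cons,
      Matrix.empty_val', Matrix.cons_val_fin_one, Matrix.head_fin_const,
      Pi.add_apply, Matrix.of_apply]
    field_simp
    ring
  rw [key, Real.sqrt_sq hR0]
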